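/- Let p, q ∈ MvPolynomial (Fin n) ℚ. Suppose that for every a : Fin n → AlgebraicClosure ℚ, p vanishes at a if and only if q vanishes at a. Then p and q have the same irreducible factors up to constant factors: for every irreducible r ∈ MvPolynomial (Fin n) ℚ, r divides p if and only if r divides q. -/

import Mathlib

open MvPolynomial

noncomputable section SameZeros

/-- A `ℚ`-linear functional on the algebraic closure sending `1` to `1`. -/
lemma exists_qlinear_proj :
    ∃ π : AlgebraicClosure ℚ →ₗ[ℚ] ℚ, π 1 = 1 := by
  set e := LinearEquiv.toSpanNonzeroSingleton ℚ (AlgebraicClosure ℚ) 1 one_ne_zero with he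
  obtain ⟨g, hg⟩ := LinearMap.exists_extend (e.symm.toLinearMap)
  have h1 : (1 : AlgebraicClosure ℚ) ∈ Submodule.span ℚ ({1} : Set (AlgebraicClosure ℚ)) :=
    Submodule.mem_span_singleton_self _
  refine ⟨g, ?_⟩
  have := LinearMap.congr_fun hg ⟨1, h1⟩
  simp only [LinearMap.coe_comp, Function.comp_apply, Submodule.coe_subtype,
    LinearEquiv.coe_coe] at this
  rw [this, LinearEquiv.symm_apply_eq]
  ext
  simp [he, LinearEquiv.toSpanNonzeroSingleton]

/-- Divisibility descends from the algebraic closure. -/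
lemma dvd_of_map_dvd_map {n : ℕ} (r s : MvPolynomial (Fin n) ℚ)
    (h : MvPolynomial.map (algebraMap ℚ (AlgebraicClosure ℚ)) r ∣
      MvPolynomial.map (algebraMap ℚ (AlgebraicClosure ℚ)) s) : r ∣ s := by
  obtain ⟨π, hπ⟩ := exists_qlinear_proj
  have hπa : ∀ c : ℚ, π (algebraMap ℚ (AlgebraicClosure ℚ) c) = c := by
    intro c
    rw [Algebra.algebraMap_eq_smul_one, map_smul, hπ, smul_eq_mul, mul_one]
  obtain ⟨t, ht⟩ := h
  set Pt : MvPolynomial (Fin n) ℚ :=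
    ∑ m ∈ t.support, monomial m (π (MvPolynomial.coeff m t)) with hPt
  have hcoeff : ∀ m, MvPolynomial.coeff m Pt = π (MvPolynomial.coeff m t) := by
    intro m
    rw [hPt]
    rw [MvPolynomial.coeff_sum]
    simp only [MvPolynomial.coeff_monomial]
    rw [Finset.sum_ite_eq' t.support m (fun m => π (MvPolynomial.coeff m t))]
    by_cases hm : m ∈ t.support
    · simp [hm]
    · simp [hm, MvPolynomial.notMem_support_iff.mp hm]
  refine ⟨Pt, ?_⟩
  ext m
  have hs : MvPolynomial.coeff m s
      = π (MvPolynomial.coeff m (MvPolynomial.map (algebraMap ℚ (AlgebraicClosure ℚ)) s)) := by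
    rw [MvPolynomial.coeff_map, hπa]
  rw [hs, ht, MvPolynomial.coeff_mul, map_sum, MvPolynomial.coeff_mul]
  refine Finset.sum_congr rfl fun x hx => ?_
  rw [MvPolynomial.coeff_map, ← Algebra.smul_def, map_smul, smul_eq_mul, hcoeff]

theorem same_zeros_same_irreducible_factors (n : ℕ) (p q : MvPolynomial (Fin n) ℚ)
    (h : ∀ a : Fin n → AlgebraicClosure ℚ,
      MvPolynomial.aeval a p = 0 ↔ MvPolynomial.aeval a q = 0) :
    ∀ r : MvPolynomial (Fin n) ℚ, Irreducible r → (r ∣ p ↔ r ∣ q) := by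
  have key : ∀ p q : MvPolynomial (Fin n) ℚ,
      (∀ a : Fin n → AlgebraicClosure ℚ,
        MvPolynomial.aeval a p = 0 ↔ MvPolynomial.aeval a q = 0) →
      ∀ r : MvPolynomial (Fin n) ℚ, Irreducible r → r ∣ p → r ∣ q := by
    intro p q h r hr hrp
    set K := AlgebraicClosure ℚ
    set φ := MvPolynomial.map (algebraMap ℚ K) with hφ
    have hq : φ q ∈ MvPolynomial.vanishingIdeal K
        (MvPolynomial.zeroLocus K (Ideal.span {φ r})) := by
      intro x hx
      have hrx : eval x (φ r) = 0 := hx _ (Ideal.subset_span rfl)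
      have hpx : MvPolynomial.aeval x p = 0 := by
        obtain ⟨s, rfl⟩ := hrp
        have : MvPolynomial.aeval x r = 0 := by
          rwa [MvPolynomial.aeval_def, MvPolynomial.eval₂_eq_eval_map]
        rw [map_mul, this, zero_mul]
      have := (h x).1 hpx
      rwa [MvPolynomial.aeval_def, MvPolynomial.eval₂_eq_eval_map] at this
    rw [MvPolynomial.vanishingIdeal_zeroLocus_eq_radical] at hq
    obtain ⟨k, hk⟩ := hq
    rw [Ideal.mem_span_singleton] at hk
    have hdvd : r ∣ q ^ k := by
      apply dvd_of_map_dvd_map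
      rwa [map_pow]
    exact (UniqueFactorizationMonoid.irreducible_iff_prime.mp hr).dvd_of_dvd_pow hdvd
  intro r hr
  exact ⟨key p q h r hr, key q p (fun a => (h a).symm) r hr⟩

end SameZeros
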